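/- Fix ν > 2. Suppose the process ((U_t, Y_t))_{t∈ℕ} is stationary; sup_{i,y} |φ_i(y)| ≤ M; the distribution of U_0 has a density bounded away from zero and infinity and the conditional density of U_j given U_0 is bounded above, so that E[K_{j₁}(u)K_{j₂}(u)] ≤ c₁ δ^{2d} for j₁ ≠ j₂; and the α-mixing coefficients satisfy α(k) ≤ C₀ ρ^k for some ρ ∈ (0,1). Then there exists a constant c > 0, not depending on δ, such that for all i, u and all j₁ ≠ j₂: |Cov[K_{j₁}(u) W_{i,j₁}, K_{j₂}(u) W_{i,j₂}]| ≤ c · δ^{2d/ν} · min(ρ^{|j₂ − j₁|}, δ^{2d})^{1 − 2/ν}. -/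

import Mathlib

open Real MeasureTheory ProbabilityTheory

section AuxCov

variable {Ω : Type*} {m0 : MeasurableSpace Ω} {μ : Measure Ω}

lemma intBdd [IsFiniteMeasure μ] {f : Ω → ℝ} (hf : AEStronglyMeasurable f μ)
    {C : ℝ} (h : ∀ᵐ ω ∂μ, |f ω| ≤ C) : Integrable f μ :=
  (integrable_const C).mono' hf (by simpa [Real.norm_eq_abs] using h)

noncomputable def covFn (μ : Measure Ω) (f g : Ω → ℝ) : ℝ :=
  (∫ ω, f ω * g ω ∂μ) - (∫ ω, f ω ∂μ) * ∫ ω, g ω ∂μ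

lemma covFn_comm (f g : Ω → ℝ) : covFn μ f g = covFn μ g f := by
  unfold covFn
  rw [mul_comm (∫ ω, f ω ∂μ)]
  congr 1
  exact integral_congr_ae (.of_forall fun ω => mul_comm _ _)

lemma covFn_eq (f g : Ω → ℝ) (hf : Integrable f μ)
    (hfg : Integrable (fun ω => f ω * g ω) μ) :
    covFn μ f g = ∫ ω, f ω * (g ω - ∫ ω', g ω' ∂μ) ∂μ := by
  have h : ∀ ω, f ω * (g ω - ∫ ω', g ω' ∂μ)
      = f ω * g ω - f ω * ∫ ω', g ω' ∂μ := fun ω => by ring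
  simp_rw [h]
  rw [integral_sub hfg (hf.mul_const _), integral_mul_const]
  rfl

lemma cov_step [IsProbabilityMeasure μ] (m : MeasurableSpace Ω)
    (hm : m ≤ m0) {X Z : Ω → ℝ} (hX : Measurable[m] X)
    {A B : ℝ} (hXb : ∀ᵐ ω ∂μ, |X ω| ≤ A)
    (hZ : AEStronglyMeasurable[m0] Z μ) (hZb : ∀ᵐ ω ∂μ, |Z ω| ≤ B) :
    ∃ ξ : Ω → ℝ, Measurable[m] ξ ∧ (∀ ω, ξ ω = 1 ∨ ξ ω = -1) ∧
      |covFn μ X Z| ≤ A * covFn μ ξ Z := by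
  have hXm0 : Measurable[m0] X := hX.mono hm le_rfl
  have hXm : AEStronglyMeasurable[m0] X μ := hXm0.aestronglyMeasurable
  have hA0 : 0 ≤ A := by
    obtain ⟨ω, hω⟩ := hXb.exists
    exact (abs_nonneg _).trans hω
  have hZint : Integrable Z μ := intBdd hZ hZb
  set c := ∫ ω, Z ω ∂μ with hc
  set Z' : Ω → ℝ := fun ω => Z ω - c with hZ'def
  have hZ'int : Integrable Z' μ := hZint.sub (integrable_const c)
  have hXZ'int : Integrable (fun ω => X ω * Z' ω) μ := hZ'int.bdd_mul hXm
    (by simpa [Real.norm_eq_abs] using hXb)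
  have hXZint : Integrable (fun ω => X ω * Z ω) μ := hZint.bdd_mul hXm
    (by simpa [Real.norm_eq_abs] using hXb)
  set W : Ω → ℝ := μ[Z'|m] with hWdef
  have hWsm : StronglyMeasurable[m] W := stronglyMeasurable_condExp
  have hWint : Integrable W μ := integrable_condExp
  have hpull : μ[X * Z'|m] =ᵐ[μ] X * μ[Z'|m] :=
    condExp_mul_of_stronglyMeasurable_left hX.stronglyMeasurable hXZ'int hZ'int
  have key : ∫ ω, X ω * Z' ω ∂μ = ∫ ω, X ω * W ω ∂μ := by
    have h1 : ∫ ω, X ω * Z' ω ∂μ = ∫ ω, (μ[X * Z'|m]) ω ∂μ :=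
      (integral_condExp hm).symm
    rw [h1]
    exact integral_congr_ae (hpull.mono fun ω h => by simpa using h)
  set ξ : Ω → ℝ := fun ω => if 0 ≤ W ω then 1 else -1 with hξdef
  have hSm : MeasurableSet[m] {ω | 0 ≤ W ω} :=
    measurableSet_le measurable_const hWsm.measurable
  have hξm : Measurable[m] ξ := Measurable.ite hSm measurable_const measurable_const
  have hξm0 : Measurable[m0] ξ := hξm.mono hm le_rfl
  have hξval : ∀ ω, ξ ω = 1 ∨ ξ ω = -1 := fun ω => by
    simp only [hξdef]; split <;> simp
  have hξb : ∀ ω, |ξ ω| ≤ 1 := fun ω => by rcases hξval ω with h | h <;> simp [h]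
  have habsW : ∀ ω, |W ω| = ξ ω * W ω := fun ω => by
    simp only [hξdef]
    split
    · rw [abs_of_nonneg (by assumption), one_mul]
    · rw [abs_of_neg (lt_of_not_ge (by assumption)), neg_one_mul]
  have hXWint : Integrable (fun ω => X ω * W ω) μ := hWint.bdd_mul hXm
    (by simpa [Real.norm_eq_abs] using hXb)
  have step1 : |∫ ω, X ω * W ω ∂μ| ≤ A * ∫ ω, |W ω| ∂μ := by
    calc |∫ ω, X ω * W ω ∂μ| ≤ ∫ ω, |X ω * W ω| ∂μ := by
          simpa only [Real.norm_eq_abs] using norm_integral_le_integral_norm (μ := μ) (fun ω => X ω * W ω)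
      _ ≤ ∫ ω, A * |W ω| ∂μ := by
          refine integral_mono_ae hXWint.abs (hWint.abs.const_mul A) ?_
          filter_upwards [hXb] with ω h
          rw [abs_mul]
          exact mul_le_mul_of_nonneg_right h (abs_nonneg _)
      _ = A * ∫ ω, |W ω| ∂μ := integral_const_mul A _
  have hξZ'int : Integrable (fun ω => ξ ω * Z' ω) μ := hZ'int.bdd_mul
    hξm0.aestronglyMeasurable (.of_forall (by simpa [Real.norm_eq_abs] using hξb))
  have hξZint : Integrable (fun ω => ξ ω * Z ω) μ := hZint.bdd_mul
    hξm0.aestronglyMeasurable (.of_forall (by simpa [Real.norm_eq_abs] using hξb))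
  have hξint : Integrable ξ μ := intBdd hξm0.aestronglyMeasurable (.of_forall hξb)
  have hpull2 : μ[ξ * Z'|m] =ᵐ[μ] ξ * μ[Z'|m] :=
    condExp_mul_of_stronglyMeasurable_left hξm.stronglyMeasurable hξZ'int hZ'int
  have key2 : ∫ ω, ξ ω * Z' ω ∂μ = ∫ ω, ξ ω * W ω ∂μ := by
    have h1 : ∫ ω, ξ ω * Z' ω ∂μ = ∫ ω, (μ[ξ * Z'|m]) ω ∂μ :=
      (integral_condExp hm).symm
    rw [h1]
    exact integral_congr_ae (hpull2.mono fun ω h => by simpa using h)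
  have step2 : ∫ ω, |W ω| ∂μ = covFn μ ξ Z := by
    rw [integral_congr_ae (.of_forall habsW), ← key2,
      covFn_eq ξ Z hξint hξZint]
  refine ⟨ξ, hξm, hξval, ?_⟩
  have hcov : covFn μ X Z = ∫ ω, X ω * W ω ∂μ := by
    rw [covFn_eq X Z (intBdd hXm hXb) hXZint, key]
  rw [hcov, ← step2]
  exact step1


section AuxCov2
variable {Ω : Type*} {m0 : MeasurableSpace Ω} {μ : Measure Ω}

lemma indInt [IsFiniteMeasure μ] {R : Set Ω} (hR : MeasurableSet[m0] R) :
    Integrable (R.indicator fun _ => (1:ℝ)) μ :=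
  (integrable_const 1).indicator hR

lemma indIntEg [IsFiniteMeasure μ] {R : Set Ω} (hR : MeasurableSet[m0] R) :
    ∫ ω, R.indicator (fun _ => (1:ℝ)) ω ∂μ = (μ R).toReal := by
  rw [integral_indicator_const (1:ℝ) hR]; simp; rfl

lemma cov_pm [IsProbabilityMeasure μ] (m₁ m₂ : MeasurableSpace Ω)
    (hm₁ : m₁ ≤ m0) (hm₂ : m₂ ≤ m0) {ξ ζ : Ω → ℝ}
    (hξ : Measurable[m₁] ξ) (hζ : Measurable[m₂] ζ)
    (hξv : ∀ ω, ξ ω = 1 ∨ ξ ω = -1) (hζv : ∀ ω, ζ ω = 1 ∨ ζ ω = -1)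
    {α₀ : ℝ}
    (hev : ∀ S T : Set Ω, MeasurableSet[m₁] S → MeasurableSet[m₂] T →
      |(μ (S ∩ T)).toReal - (μ S).toReal * (μ T).toReal| ≤ α₀) :
    |covFn μ ξ ζ| ≤ 4 * α₀ := by
  classical
  set S := ξ ⁻¹' {1} with hSdef
  set T := ζ ⁻¹' {1} with hTdef
  have hSmeas : MeasurableSet[m₁] S := hξ (measurableSet_singleton 1)
  have hTmeas : MeasurableSet[m₂] T := hζ (measurableSet_singleton 1)
  have hSm0 : MeasurableSet[m0] S := hm₁ _ hSmeas
  have hTm0 : MeasurableSet[m0] T := hm₂ _ hTmeas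
  have hSTm0 : MeasurableSet[m0] (S ∩ T) := hSm0.inter hTm0
  have hξeq : ∀ ω, ξ ω = if ω ∈ S then 1 else -1 := fun ω => by
    rcases hξv ω with h | h <;> simp [hSdef, Set.mem_preimage, h] <;> norm_num
  have hζeq : ∀ ω, ζ ω = if ω ∈ T then 1 else -1 := fun ω => by
    rcases hζv ω with h | h <;> simp [hTdef, Set.mem_preimage, h] <;> norm_num
  have hprod : ∀ ω, ξ ω * ζ ω =
      4 * (S ∩ T).indicator (fun _ => (1:ℝ)) ω
        - 2 * S.indicator (fun _ => (1:ℝ)) ω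
        - 2 * T.indicator (fun _ => (1:ℝ)) ω + 1 := fun ω => by
    rw [hξeq ω, hζeq ω]
    by_cases h1 : ω ∈ S <;> by_cases h2 : ω ∈ T <;>
      simp [Set.indicator_apply, h1, h2] <;> norm_num
  have hξeq' : ∀ ω, ξ ω = 2 * S.indicator (fun _ => (1:ℝ)) ω - 1 := fun ω => by
    rw [hξeq ω]; by_cases h1 : ω ∈ S <;> simp [Set.indicator_apply, h1] <;> norm_num
  have hζeq' : ∀ ω, ζ ω = 2 * T.indicator (fun _ => (1:ℝ)) ω - 1 := fun ω => by
    rw [hζeq ω]; by_cases h1 : ω ∈ T <;> simp [Set.indicator_apply, h1] <;> norm_num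
  have IS : Integrable (fun ω => 2 * S.indicator (fun _ => (1:ℝ)) ω) μ := by
    exact (indInt hSm0).const_mul 2
  have IT : Integrable (fun ω => 2 * T.indicator (fun _ => (1:ℝ)) ω) μ := by
    exact (indInt hTm0).const_mul 2
  have I1 : Integrable (fun ω => 4 * (S ∩ T).indicator (fun _ => (1:ℝ)) ω) μ := by
    exact (indInt hSTm0).const_mul 4
  have I12 : Integrable (fun ω => 4 * (S ∩ T).indicator (fun _ => (1:ℝ)) ω
      - 2 * S.indicator (fun _ => (1:ℝ)) ω) μ := by exact I1.sub IS
  have I123 : Integrable (fun ω => 4 * (S ∩ T).indicator (fun _ => (1:ℝ)) ω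
      - 2 * S.indicator (fun _ => (1:ℝ)) ω - 2 * T.indicator (fun _ => (1:ℝ)) ω) μ := by
    exact I12.sub IT
  have iξ : ∫ ω, ξ ω ∂μ = 2 * (μ S).toReal - 1 := by
    rw [integral_congr_ae (.of_forall hξeq'), integral_sub IS (integrable_const 1),
      integral_const_mul, indIntEg hSm0]
    simp
  have iζ : ∫ ω, ζ ω ∂μ = 2 * (μ T).toReal - 1 := by
    rw [integral_congr_ae (.of_forall hζeq'), integral_sub IT (integrable_const 1),
      integral_const_mul, indIntEg hTm0]
    simp
  have iprod : ∫ ω, ξ ω * ζ ω ∂μ =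
      4 * (μ (S ∩ T)).toReal - 2 * (μ S).toReal - 2 * (μ T).toReal + 1 := by
    rw [integral_congr_ae (.of_forall hprod), integral_add I123 (integrable_const 1),
      integral_sub I12 IT, integral_sub I1 IS,
      integral_const_mul, integral_const_mul, integral_const_mul,
      indIntEg hSTm0, indIntEg hSm0, indIntEg hTm0]
    simp
  have hcov : covFn μ ξ ζ =
      4 * ((μ (S ∩ T)).toReal - (μ S).toReal * (μ T).toReal) := by
    unfold covFn
    rw [iprod, iξ, iζ]; ring
  rw [hcov, abs_mul, abs_of_nonneg (by norm_num : (0:ℝ) ≤ 4)]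
  exact mul_le_mul_of_nonneg_left (hev S T hSmeas hTmeas) (by norm_num)

lemma cov_main [IsProbabilityMeasure μ] (m₁ m₂ : MeasurableSpace Ω)
    (hm₁ : m₁ ≤ m0) (hm₂ : m₂ ≤ m0) {X Z : Ω → ℝ}
    (hX : Measurable[m₁] X) (hZ : Measurable[m₂] Z)
    {A B α₀ : ℝ} (hXb : ∀ᵐ ω ∂μ, |X ω| ≤ A) (hZb : ∀ᵐ ω ∂μ, |Z ω| ≤ B)
    (hev : ∀ S T : Set Ω, MeasurableSet[m₁] S → MeasurableSet[m₂] T →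
      |(μ (S ∩ T)).toReal - (μ S).toReal * (μ T).toReal| ≤ α₀) :
    |covFn μ X Z| ≤ 4 * A * B * α₀ := by
  have hα0 : 0 ≤ α₀ :=
    (abs_nonneg _).trans (hev ∅ ∅ (@MeasurableSet.empty _ m₁) (@MeasurableSet.empty _ m₂))
  have hA0 : 0 ≤ A := by
    obtain ⟨ω, hω⟩ := hXb.exists; exact (abs_nonneg _).trans hω
  have hB0 : 0 ≤ B := by
    obtain ⟨ω, hω⟩ := hZb.exists; exact (abs_nonneg _).trans hω
  obtain ⟨ξ, hξm, hξv, h1⟩ := cov_step m₁ hm₁ hX hXb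
    ((hZ.mono hm₂ le_rfl).aestronglyMeasurable) hZb
  have hξb : ∀ᵐ ω ∂μ, |ξ ω| ≤ 1 := .of_forall fun ω => by
    rcases hξv ω with h | h <;> simp [h]
  obtain ⟨ζ, hζm, hζv, h2⟩ := cov_step m₂ hm₂ hZ hZb
    ((hξm.mono hm₁ le_rfl).aestronglyMeasurable) hξb
  have h3 : |covFn μ ζ ξ| ≤ 4 * α₀ := by
    rw [covFn_comm]
    exact cov_pm m₁ m₂ hm₁ hm₂ hξm hζm hξv hζv hev
  calc |covFn μ X Z| ≤ A * covFn μ ξ Z := h1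
    _ = A * covFn μ Z ξ := by rw [covFn_comm]
    _ ≤ A * |covFn μ Z ξ| := mul_le_mul_of_nonneg_left (le_abs_self _) hA0
    _ ≤ A * (B * covFn μ ζ ξ) := mul_le_mul_of_nonneg_left h2 hA0
    _ ≤ A * (B * (4 * α₀)) := mul_le_mul_of_nonneg_left
        (mul_le_mul_of_nonneg_left ((le_abs_self _).trans h3) hB0) hA0
    _ = 4 * A * B * α₀ := by ring

end AuxCov2
end AuxCov

set_option maxHeartbeats 1000000 in
/-- **Covariance bound under mixing.** Fix `ν > 2`. Under stationarity, the uniform bound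
`sup_{i,y} |φ_i(y)| ≤ M`, marginal/conditional density bounds giving
`E[K_{j₁}(u) K_{j₂}(u)] ≤ c₁ δ^{2d}` for `j₁ ≠ j₂`, and geometric α-mixing
`α(k) ≤ C₀ ρ^k`, there is a constant `c > 0` (independent of `δ`) with
`|Cov[K_{j₁} W_{i,j₁}, K_{j₂} W_{i,j₂}]| ≤ c δ^{2d/ν} min(ρ^{|j₂−j₁|}, δ^{2d})^{1−2/ν}`. -/
theorem stmt_7 {d : ℕ} {Ω : Type*} [MeasurableSpace Ω]
    (μ : Measure Ω) [IsProbabilityMeasure μ]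
    (U : ℕ → Ω → EuclideanSpace ℝ (Fin d)) (Y : ℕ → Ω → ℝ)
    (hU : ∀ j, Measurable (U j)) (hY : ∀ j, Measurable (Y j))
    (ν : ℝ) (hν : 2 < ν)
    -- stationarity of the process
    (hstat : ∀ n t : ℕ,
      Measure.map (fun ω => fun k : Fin n => (U (t + k) ω, Y (t + k) ω)) μ
        = Measure.map (fun ω => fun k : Fin n => (U k ω, Y k ω)) μ)
    (φ : ℕ → ℝ → ℝ) (hφmeas : ∀ i, Measurable (φ i))
    (M : ℝ) (hM : ∀ (i : ℕ) (y : ℝ), |φ i y| ≤ M)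
    (β : ℕ → EuclideanSpace ℝ (Fin d) → ℝ) (hβmeas : ∀ i, Measurable (β i))
    -- `β_i(U_j) = E[φ_i(Y_j) | U_j]`
    (hcond : ∀ i j, (fun ω => β i (U j ω)) =ᵐ[μ]
      μ[fun ω => φ i (Y j ω)|MeasurableSpace.comap (U j) inferInstance])
    -- the distribution of `U_0` has a density bounded away from zero and infinity
    (hdens : ∃ (p : EuclideanSpace ℝ (Fin d) → ℝ) (a b : ℝ), 0 < a ∧
      Measure.map (U 0) μ
        = (volume : Measure (EuclideanSpace ℝ (Fin d))).withDensity
            (fun u => ENNReal.ofReal (p u)) ∧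
      ∀ u, p u ≠ 0 → a ≤ p u ∧ p u ≤ b)
    -- the conditional density of `U_j` given `U_0` is bounded above, so that
    -- `E[K_{j₁}(u) K_{j₂}(u)] ≤ c₁ δ^{2d}` for `j₁ ≠ j₂`:
    (c₁ : ℝ) (hc₁ : 0 < c₁)
    (hKK : ∀ (δ : ℝ), 0 < δ → ∀ (j₁ j₂ : ℕ), j₁ ≠ j₂ →
      ∀ u : EuclideanSpace ℝ (Fin d),
        (∫ ω, (if ‖U j₁ ω - u‖ ≤ δ then (1 : ℝ) else 0)
            * (if ‖U j₂ ω - u‖ ≤ δ then (1 : ℝ) else 0) ∂μ) ≤ c₁ * δ ^ (2 * d))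
    -- geometric α-mixing: `α(k) ≤ C₀ ρ^k`
    (ρ : ℝ) (hρ : ρ ∈ Set.Ioo (0 : ℝ) 1) (C₀ : ℝ)
    (α : ℕ → ℝ)
    (hα : ∀ (k : ℕ) (A B : Set Ω),
      MeasurableSet[MeasurableSpace.comap (fun ω => (U 0 ω, Y 0 ω)) inferInstance] A →
      MeasurableSet[⨆ i : ℕ, ⨆ _ : k ≤ i,
        MeasurableSpace.comap (fun ω => (U i ω, Y i ω)) inferInstance] B →
      |(μ (A ∩ B)).toReal - (μ A).toReal * (μ B).toReal| ≤ α k)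
    (hαρ : ∀ k, α k ≤ C₀ * ρ ^ k) :
    ∃ c : ℝ, 0 < c ∧ ∀ (δ : ℝ), 0 < δ → ∀ (i j₁ j₂ : ℕ), j₁ ≠ j₂ →
      ∀ u : EuclideanSpace ℝ (Fin d),
        |(∫ ω, ((if ‖U j₁ ω - u‖ ≤ δ then (1 : ℝ) else 0)
              * (φ i (Y j₁ ω) - β i (U j₁ ω)))
            * ((if ‖U j₂ ω - u‖ ≤ δ then (1 : ℝ) else 0)
              * (φ i (Y j₂ ω) - β i (U j₂ ω))) ∂μ)
          - (∫ ω, (if ‖U j₁ ω - u‖ ≤ δ then (1 : ℝ) else 0)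
              * (φ i (Y j₁ ω) - β i (U j₁ ω)) ∂μ)
            * (∫ ω, (if ‖U j₂ ω - u‖ ≤ δ then (1 : ℝ) else 0)
              * (φ i (Y j₂ ω) - β i (U j₂ ω)) ∂μ)|
        ≤ c * δ ^ ((2 * d : ℝ) / ν)
            * (min (ρ ^ Nat.dist j₁ j₂) (δ ^ (2 * d))) ^ (1 - 2 / ν) := by
  obtain ⟨hρ0, hρ1⟩ := hρ
  have hν0 : (0:ℝ) < ν := by linarith
  have hM0 : 0 ≤ M := (abs_nonneg _).trans (hM 0 0)
  have hα0 : ∀ k, 0 ≤ α k := fun k =>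
    (abs_nonneg _).trans (hα k ∅ ∅
      (@MeasurableSet.empty _ (MeasurableSpace.comap (fun ω => (U 0 ω, Y 0 ω)) inferInstance))
      (@MeasurableSet.empty _ (⨆ i : ℕ, ⨆ _ : k ≤ i,
        MeasurableSpace.comap (fun ω => (U i ω, Y i ω)) inferInstance)))
  have hC₀0 : 0 ≤ C₀ := by
    have h1 := (hα0 1).trans (hαρ 1)
    nlinarith
  refine ⟨4*M^2*c₁ + 16*M^2*C₀ + 1, by positivity, ?_⟩
  intro δ hδ i j₁ j₂ hne u
  set cval : ℝ := 4*M^2*c₁ + 16*M^2*C₀ + 1 with hcval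
  set g : EuclideanSpace ℝ (Fin d) × ℝ → ℝ :=
    fun p => (if ‖p.1 - u‖ ≤ δ then (1:ℝ) else 0) * (φ i p.2 - β i p.1) with hgdef
  have hgmeas : Measurable g := by
    apply Measurable.mul
    · exact Measurable.ite
        (measurableSet_le ((measurable_fst.sub measurable_const).norm) measurable_const)
        measurable_const measurable_const
    · exact ((hφmeas i).comp measurable_snd).sub ((hβmeas i).comp measurable_fst)
  set X : ℕ → Ω → ℝ := fun j ω => g (U j ω, Y j ω) with hXdef
  have hXmeas : ∀ j, Measurable (X j) := fun j => hgmeas.comp ((hU j).prodMk (hY j))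
  have hβbd : ∀ j, ∀ᵐ ω ∂μ, |β i (U j ω)| ≤ M := by
    intro j
    have hφb : ∀ᵐ ω ∂μ, |φ i (Y j ω)| ≤ ((⟨M, hM0⟩ : NNReal) : ℝ) := .of_forall fun ω => hM i _
    have h2 := ae_bdd_condExp_of_ae_bdd
      (m := MeasurableSpace.comap (U j) inferInstance) hφb
    filter_upwards [h2, hcond i j] with ω h1 heq
    rw [heq]; exact h1
  have hDbd : ∀ j, ∀ᵐ ω ∂μ, |φ i (Y j ω) - β i (U j ω)| ≤ 2*M := by
    intro j
    filter_upwards [hβbd j] with ω h1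
    have h2 := hM i (Y j ω)
    have h3 := abs_sub (φ i (Y j ω)) (β i (U j ω))
    linarith
  have hXbd : ∀ j, ∀ᵐ ω ∂μ, |X j ω| ≤ 2 * M := by
    intro j
    filter_upwards [hDbd j] with ω h1
    have hK : |(if ‖U j ω - u‖ ≤ δ then (1:ℝ) else 0)| ≤ 1 := by split <;> norm_num
    calc |X j ω| = |(if ‖U j ω - u‖ ≤ δ then (1:ℝ) else 0)| * |φ i (Y j ω) - β i (U j ω)| := by
          rw [hXdef, ← abs_mul]
      _ ≤ 1 * (2*M) := mul_le_mul hK h1 (abs_nonneg _) one_pos.le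
      _ = 2*M := one_mul _
  have hmean : ∀ j, ∫ ω, X j ω ∂μ = 0 := by
    intro j
    set K : Ω → ℝ := fun ω => if ‖U j ω - u‖ ≤ δ then (1:ℝ) else 0 with hKdef
    have hKb : ∀ ω, |K ω| ≤ 1 := fun ω => by
      simp only [hKdef]; split <;> norm_num
    have hKamb : Measurable K := Measurable.ite
      (measurableSet_le ((hU j).sub measurable_const).norm measurable_const)
      measurable_const measurable_const
    have hφY : Measurable (fun ω => φ i (Y j ω)) := (hφmeas i).comp (hY j)
    have hφint : Integrable (fun ω => φ i (Y j ω)) μ :=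
      intBdd hφY.aestronglyMeasurable (C := M) (.of_forall fun ω => hM i _)
    have hKφint : Integrable (fun ω => K ω * φ i (Y j ω)) μ :=
      hφint.bdd_mul hKamb.aestronglyMeasurable
        (.of_forall (by simpa [Real.norm_eq_abs] using hKb))
    have hβU : Measurable (fun ω => β i (U j ω)) := (hβmeas i).comp (hU j)
    have hβint : Integrable (fun ω => β i (U j ω)) μ :=
      intBdd hβU.aestronglyMeasurable (C := M) (hβbd j)
    have hKβint : Integrable (fun ω => K ω * β i (U j ω)) μ :=
      hβint.bdd_mul hKamb.aestronglyMeasurable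
        (.of_forall (by simpa [Real.norm_eq_abs] using hKb))
    set m := MeasurableSpace.comap (U j) inferInstance with hmdef
    have hm : m ≤ _ := (hU j).comap_le
    have hUj : Measurable[m] (U j) := Measurable.of_comap_le le_rfl
    have hKm : Measurable[m] K :=
      Measurable.ite (hUj (measurableSet_le (measurable_id.sub measurable_const).norm
        measurable_const)) measurable_const measurable_const
    have hpull : μ[K * (fun ω => φ i (Y j ω))|m] =ᵐ[μ] K * μ[(fun ω => φ i (Y j ω))|m] :=
      condExp_mul_of_stronglyMeasurable_left hKm.stronglyMeasurable hKφint hφint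
    have e1 : ∫ ω, K ω * β i (U j ω) ∂μ
        = ∫ ω, K ω * (μ[fun ω => φ i (Y j ω)|m]) ω ∂μ := by
      refine integral_congr_ae ?_
      filter_upwards [hcond i j] with ω h
      rw [h]
    have e2 : ∫ ω, K ω * (μ[fun ω => φ i (Y j ω)|m]) ω ∂μ
        = ∫ ω, K ω * φ i (Y j ω) ∂μ := by
      calc ∫ ω, K ω * (μ[fun ω => φ i (Y j ω)|m]) ω ∂μ
          = ∫ ω, (μ[K * (fun ω => φ i (Y j ω))|m]) ω ∂μ :=
            (integral_congr_ae (hpull.mono fun ω h => by simpa using h)).symm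
        _ = ∫ ω, (K * fun ω => φ i (Y j ω)) ω ∂μ := integral_condExp hm
        _ = ∫ ω, K ω * φ i (Y j ω) ∂μ := rfl
    have hsplit : ∀ ω, X j ω = K ω * φ i (Y j ω) - K ω * β i (U j ω) := fun ω => by
      simp only [hXdef, hgdef, hKdef]; ring
    rw [integral_congr_ae (.of_forall hsplit), integral_sub hKφint hKβint, e1, e2, sub_self]
  have htrans : ∀ a b : ℕ, a < b →
      ∫ ω, X a ω * X b ω ∂μ = ∫ ω, X 0 ω * X (b - a) ω ∂μ := by
    intro a b hab
    set k := b - a with hk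
    have hklt : k < k + 1 := Nat.lt_succ_self k
    set H : (Fin (k+1) → (EuclideanSpace ℝ (Fin d)) × ℝ) → ℝ :=
      fun v => g (v 0) * g (v ⟨k, hklt⟩) with hHdef
    have hH : Measurable H :=
      (hgmeas.comp (measurable_pi_apply 0)).mul (hgmeas.comp (measurable_pi_apply _))
    have h₁ : Measurable (fun ω => fun m : Fin (k+1) => (U (a + ↑m) ω, Y (a + ↑m) ω)) :=
      measurable_pi_lambda _ fun m => (hU _).prodMk (hY _)
    have h₂ : Measurable (fun ω => fun m : Fin (k+1) => (U (↑m) ω, Y (↑m) ω)) :=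
      measurable_pi_lambda _ fun m => (hU _).prodMk (hY _)
    have hab' : a + k = b := by omega
    calc ∫ ω, X a ω * X b ω ∂μ
        = ∫ ω, H (fun m : Fin (k+1) => (U (a + ↑m) ω, Y (a + ↑m) ω)) ∂μ := by
          refine integral_congr_ae (.of_forall fun ω => ?_)
          simp only [hHdef, hXdef, Fin.val_zero, add_zero, Fin.val_mk, hab']
      _ = ∫ v, H v ∂(Measure.map
            (fun ω => fun m : Fin (k+1) => (U (a + ↑m) ω, Y (a + ↑m) ω)) μ) :=
          (integral_map h₁.aemeasurable hH.aestronglyMeasurable).symm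
      _ = ∫ v, H v ∂(Measure.map
            (fun ω => fun m : Fin (k+1) => (U (↑m) ω, Y (↑m) ω)) μ) := by
          rw [hstat (k+1) a]
      _ = ∫ ω, H (fun m : Fin (k+1) => (U (↑m) ω, Y (↑m) ω)) ∂μ :=
          integral_map h₂.aemeasurable hH.aestronglyMeasurable
      _ = ∫ ω, X 0 ω * X k ω ∂μ := by
          refine integral_congr_ae (.of_forall fun ω => ?_)
          simp only [hHdef, hXdef, Fin.val_zero, Fin.val_mk]
  have hcore : ∀ a b : ℕ, a < b →
      |∫ ω, X a ω * X b ω ∂μ|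
        ≤ cval * δ ^ ((2 * d : ℝ) / ν) * (min (ρ ^ (b - a)) (δ ^ (2 * d))) ^ (1 - 2/ν) := by
    intro a b hab
    set k := b - a with hk
    have hk1 : 1 ≤ k := by omega
    rw [htrans a b hab]
    rcases le_total (ρ ^ k) (δ ^ (2*d)) with hmin | hmin
    · -- mixing case
      rw [min_eq_left hmin]
      have hm₁ := ((hU 0).prodMk (hY 0)).comap_le
      have hm₂ := iSup_le (fun i' : ℕ => iSup_le (fun _ : k ≤ i' =>
        ((hU i').prodMk (hY i')).comap_le))
      set m₁ := MeasurableSpace.comap (fun ω => (U 0 ω, Y 0 ω)) inferInstance with hm₁def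
      set m₂ := ⨆ i' : ℕ, ⨆ _ : k ≤ i',
        MeasurableSpace.comap (fun ω => (U i' ω, Y i' ω)) inferInstance with hm₂def
      have hXm₁ : Measurable[m₁] (X 0) := hgmeas.comp (Measurable.of_comap_le le_rfl)
      have hXm₂ : Measurable[m₂] (X k) := by
        have h1 : Measurable[MeasurableSpace.comap (fun ω => (U k ω, Y k ω)) inferInstance]
            (X k) := hgmeas.comp (Measurable.of_comap_le le_rfl)
        refine h1.mono ?_ le_rfl
        exact le_iSup₂ (f := fun i' (_ : k ≤ i') =>
          MeasurableSpace.comap (fun ω => (U i' ω, Y i' ω)) inferInstance) k le_rfl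
      have hcov := cov_main m₁ m₂ hm₁ hm₂ hXm₁ hXm₂ (hXbd 0) (hXbd k)
        (fun S T hS hT => hα k S T hS hT)
      have hXk : |∫ ω, X 0 ω * X k ω ∂μ| ≤ 16 * M^2 * α k := by
        have he : covFn μ (X 0) (X k) = ∫ ω, X 0 ω * X k ω ∂μ := by
          unfold covFn; rw [hmean 0, hmean k]; ring
        calc |∫ ω, X 0 ω * X k ω ∂μ| = |covFn μ (X 0) (X k)| := by rw [he]
          _ ≤ 4 * (2*M) * (2*M) * α k := hcov
          _ = 16 * M^2 * α k := by ring
      have hρk0 : (0:ℝ) < ρ ^ k := pow_pos hρ0 k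
      have hfac : ρ ^ k ≤ δ ^ ((2*d : ℝ)/ν) * ((ρ^k : ℝ)) ^ (1 - 2/ν) := by
        rcases le_total δ 1 with hδ1 | hδ1
        · have e : (ρ^k : ℝ) = (ρ^k) ^ ((2:ℝ)/ν) * (ρ^k) ^ ((1:ℝ) - 2/ν) := by
            rw [← Real.rpow_add hρk0, show (2:ℝ)/ν + (1 - 2/ν) = 1 by ring, Real.rpow_one]
          refine e.trans_le (mul_le_mul_of_nonneg_right ?_ (Real.rpow_nonneg hρk0.le _))
          calc (ρ^k : ℝ) ^ ((2:ℝ)/ν) ≤ (δ^(2*d) : ℝ) ^ ((2:ℝ)/ν) :=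
                Real.rpow_le_rpow hρk0.le hmin (by positivity)
            _ = δ ^ (((2*d : ℕ) : ℝ) * (2/ν)) := by
                rw [← Real.rpow_natCast δ (2*d), ← Real.rpow_mul hδ.le]
            _ ≤ δ ^ ((2*d : ℝ)/ν) := by
                apply Real.rpow_le_rpow_of_exponent_ge hδ hδ1
                push_cast
                have hd0 : (0:ℝ) ≤ (2*(d:ℝ))/ν := by positivity
                have : ((2:ℝ)*d) * (2/ν) = 2*((2*(d:ℝ))/ν) := by ring
                rw [this]
                linarith
        · have h1 : (ρ^k : ℝ) ≤ (ρ^k) ^ ((1:ℝ) - 2/ν) := by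
            have hle1 : (ρ^k : ℝ) ≤ 1 := pow_le_one₀ hρ0.le hρ1.le
            have h2 := Real.rpow_le_rpow_of_exponent_ge hρk0 hle1
              (show (1:ℝ) - 2/ν ≤ 1 by
                have : (0:ℝ) < 2/ν := by positivity
                linarith)
            simpa [Real.rpow_one] using h2
          have h2 : (1:ℝ) ≤ δ ^ ((2*d : ℝ)/ν) := by
            have h3 := Real.rpow_le_rpow_of_exponent_le hδ1
              (show (0:ℝ) ≤ (2*d : ℝ)/ν by positivity)
            simpa using h3
          nlinarith [Real.rpow_nonneg hρk0.le ((1:ℝ) - 2/ν)]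
      have hcoef : 16*M^2*C₀ ≤ cval := by
        have h1 : (0:ℝ) ≤ 4*M^2*c₁ := by positivity
        rw [hcval]; linarith
      have hRf : (0:ℝ) ≤ δ ^ ((2*d : ℝ)/ν) * ((ρ^k : ℝ)) ^ (1 - 2/ν) := by positivity
      calc |∫ ω, X 0 ω * X k ω ∂μ| ≤ 16 * M^2 * α k := hXk
        _ ≤ 16*M^2 * (C₀ * ρ^k) := by nlinarith [hαρ k, sq_nonneg M]
        _ = 16*M^2*C₀ * (ρ^k) := by ring
        _ ≤ 16*M^2*C₀ * (δ ^ ((2*d : ℝ)/ν) * ((ρ^k : ℝ)) ^ (1 - 2/ν)) := by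
            refine mul_le_mul_of_nonneg_left hfac (by positivity)
        _ ≤ cval * δ ^ ((2*d : ℝ)/ν) * ((ρ^k : ℝ)) ^ (1 - 2/ν) := by
            nlinarith [hcoef, hRf]
    · -- direct case
      rw [min_eq_right hmin]
      have hd1 : δ^(2*d) < 1 :=
        lt_of_le_of_lt hmin (pow_lt_one₀ hρ0.le hρ1 (by omega))
      have hδ1 : δ < 1 := by
        by_contra hcon
        push_neg at hcon
        have h1 : (1:ℝ) ≤ δ^(2*d) := one_le_pow₀ hcon
        linarith
      set K0 : Ω → ℝ := fun ω => if ‖U 0 ω - u‖ ≤ δ then (1:ℝ) else 0 with hK0def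
      set Kk : Ω → ℝ := fun ω => if ‖U k ω - u‖ ≤ δ then (1:ℝ) else 0 with hKkdef
      have hK0m : Measurable K0 := Measurable.ite
        (measurableSet_le ((hU 0).sub measurable_const).norm measurable_const)
        measurable_const measurable_const
      have hKkm : Measurable Kk := Measurable.ite
        (measurableSet_le ((hU k).sub measurable_const).norm measurable_const)
        measurable_const measurable_const
      have hx : ∀ᵐ ω ∂μ, |X 0 ω * X k ω| ≤ (2*M)^2 * (K0 ω * Kk ω) := by
        filter_upwards [hDbd 0, hDbd k] with ω h0 hk'
        by_cases c0 : ‖U 0 ω - u‖ ≤ δ <;> by_cases ck : ‖U k ω - u‖ ≤ δ <;>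
          simp only [hXdef, hgdef, hK0def, hKkdef, c0, ck, if_true, if_false, one_mul,
            mul_one, zero_mul, mul_zero, abs_zero] <;>
          [skip; positivity; positivity; positivity]
        rw [abs_mul]
        nlinarith [abs_nonneg (φ i (Y 0 ω) - β i (U 0 ω)),
          abs_nonneg (φ i (Y k ω) - β i (U k ω))]
      have hint1 : Integrable (fun ω => X 0 ω * X k ω) μ :=
        (intBdd (hXmeas k).aestronglyMeasurable (hXbd k)).bdd_mul
          (hXmeas 0).aestronglyMeasurable (by simpa [Real.norm_eq_abs] using hXbd 0)
      have hKKb : ∀ ω, |K0 ω * Kk ω| ≤ 1 := fun ω => by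
        simp only [hK0def, hKkdef]
        split <;> split <;> norm_num
      have hint2 : Integrable (fun ω => (2*M)^2 * (K0 ω * Kk ω)) μ := by
        refine (intBdd (hK0m.mul hKkm).aestronglyMeasurable (C := 1)
          (.of_forall hKKb)).const_mul _
      have hstep : |∫ ω, X 0 ω * X k ω ∂μ| ≤ (2*M)^2 * (c₁ * δ^(2*d)) := by
        calc |∫ ω, X 0 ω * X k ω ∂μ| ≤ ∫ ω, |X 0 ω * X k ω| ∂μ := by
              simpa only [Real.norm_eq_abs] using
                norm_integral_le_integral_norm (μ := μ) (fun ω => X 0 ω * X k ω)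
          _ ≤ ∫ ω, (2*M)^2 * (K0 ω * Kk ω) ∂μ := integral_mono_ae hint1.abs hint2 hx
          _ = (2*M)^2 * ∫ ω, K0 ω * Kk ω ∂μ := integral_const_mul _ _
          _ ≤ (2*M)^2 * (c₁ * δ^(2*d)) := by
              refine mul_le_mul_of_nonneg_left ?_ (by positivity)
              exact hKK δ hδ 0 k (by omega) u
      have hfac : (δ:ℝ)^(2*d) ≤ δ ^ ((2*d : ℝ)/ν) * ((δ^(2*d) : ℝ)) ^ ((1:ℝ) - 2/ν) := by
        have e1 : ((δ^(2*d) : ℝ)) ^ ((1:ℝ) - 2/ν) = δ ^ (((2*d : ℕ):ℝ) * (1 - 2/ν)) := by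
          rw [← Real.rpow_natCast δ (2*d), ← Real.rpow_mul hδ.le]
        rw [e1, ← Real.rpow_add hδ]
        have e2 : (δ:ℝ)^(2*d) = δ ^ (((2*d : ℕ)):ℝ) := (Real.rpow_natCast δ (2*d)).symm
        rw [e2]
        apply Real.rpow_le_rpow_of_exponent_ge hδ hδ1.le
        push_cast
        have h1 : (0:ℝ) ≤ 2*(d:ℝ)/ν := by positivity
        have h2 : (2*(d:ℝ))/ν + 2*(d:ℝ)*(1 - 2/ν) = 2*(d:ℝ) - 2*(d:ℝ)/ν := by ring
        nlinarith
      have hcoef : 4*M^2*c₁ ≤ cval := by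
        have h1 : (0:ℝ) ≤ 16*M^2*C₀ := by positivity
        rw [hcval]; linarith
      have hRf : (0:ℝ) ≤ δ ^ ((2*d : ℝ)/ν) * ((δ^(2*d) : ℝ)) ^ ((1:ℝ) - 2/ν) := by positivity
      calc |∫ ω, X 0 ω * X k ω ∂μ| ≤ (2*M)^2 * (c₁ * δ^(2*d)) := hstep
        _ = 4*M^2*c₁ * δ^(2*d) := by ring
        _ ≤ 4*M^2*c₁ * (δ ^ ((2*d : ℝ)/ν) * ((δ^(2*d) : ℝ)) ^ ((1:ℝ) - 2/ν)) :=
            mul_le_mul_of_nonneg_left hfac (by positivity)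
        _ ≤ cval * δ ^ ((2*d : ℝ)/ν) * ((δ^(2*d) : ℝ)) ^ ((1:ℝ) - 2/ν) := by
            nlinarith [hcoef, hRf]
  have hmain : ∀ a b : ℕ, a ≠ b →
      |(∫ ω, X a ω * X b ω ∂μ) - (∫ ω, X a ω ∂μ) * ∫ ω, X b ω ∂μ|
        ≤ cval * δ ^ ((2 * d : ℝ) / ν)
            * (min (ρ ^ Nat.dist a b) (δ ^ (2 * d))) ^ (1 - 2 / ν) := by
    intro a b hab
    rw [hmean a, hmean b, zero_mul, sub_zero]
    rcases hab.lt_or_gt with h | h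
    · rw [Nat.dist_eq_sub_of_le h.le]
      exact hcore a b h
    · rw [Nat.dist_comm, Nat.dist_eq_sub_of_le h.le,
        show (∫ ω, X a ω * X b ω ∂μ) = ∫ ω, X b ω * X a ω ∂μ from
          integral_congr_ae (.of_forall fun ω => mul_comm _ _)]
      exact hcore b a h
  exact hmain j₁ j₂ hne
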